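/- In the second adversarial example structure: if three agents a₁, a₂, a₃ occupy the vertices v₁, v₂, v₃ of a triangle at turn i and are each scheduled to rotate (a₁ → v₃, a₂ → v₁, a₃ → v₂ in one turn), then if any single agent delays at turn i, all three agents must delay at turn i in any feasible continuation (the rotation cannot proceed partially). -/
import Mathlib


/-- If three agents a₁, a₂, a₃ occupy the vertices v₁, v₂, v₃ of a triangle at
turn i and are each scheduled to rotate (a₁ → v₃, a₂ → v₁, a₃ → v₂), each agent at turn i+1
either moving to its intended vertex or delaying (staying put), then if any single agent delays
at turn i, all three must delay (the rotation cannot proceed partially). -/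
theorem stmt_17 {V A : Type*} (G : SimpleGraph V) (s : ℕ → A → V)
    (v₁ v₂ v₃ : V) (h12 : G.Adj v₁ v₂) (h23 : G.Adj v₂ v₃) (h13 : G.Adj v₁ v₃)
    (a₁ a₂ a₃ : A) (h12a : a₁ ≠ a₂) (h23a : a₂ ≠ a₃) (h13a : a₁ ≠ a₃)
    (i : ℕ)
    (hpos : s i a₁ = v₁ ∧ s i a₂ = v₂ ∧ s i a₃ = v₃)
    (hinj : Function.Injective (s (i + 1)))
    (hnoswap : ∀ a b : A, a ≠ b →
      ¬(s (i + 1) a = s i b ∧ s (i + 1) b = s i a ∧ s i a ≠ s i b))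
    (hnext₁ : s (i + 1) a₁ = v₃ ∨ s (i + 1) a₁ = s i a₁)
    (hnext₂ : s (i + 1) a₂ = v₁ ∨ s (i + 1) a₂ = s i a₂)
    (hnext₃ : s (i + 1) a₃ = v₂ ∨ s (i + 1) a₃ = s i a₃) :
    (s (i + 1) a₁ = s i a₁ ∨ s (i + 1) a₂ = s i a₂ ∨ s (i + 1) a₃ = s i a₃) →
      (s (i + 1) a₁ = s i a₁ ∧ s (i + 1) a₂ = s i a₂ ∧ s (i + 1) a₃ = s i a₃) := by
  obtain ⟨h1, h2, h3⟩ := hpos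
  intro hd
  rcases hnext₁ with k1 | k1 <;> rcases hnext₂ with k2 | k2 <;> rcases hnext₃ with k3 | k3
  · rw [k1, k2, k3, h1, h2, h3] at hd
    exact absurd hd (by push_neg; exact ⟨h13.ne', h12.ne, h23.ne⟩)
  · exact absurd (hinj (k1.trans (k3.trans h3).symm)) h13a
  · exact absurd (hinj (k3.trans (k2.trans h2).symm)) h23a.symm
  · exact absurd (hinj (k1.trans (k3.trans h3).symm)) h13a
  · exact absurd (hinj (k2.trans (k1.trans h1).symm)) h12a.symm
  · exact absurd (hinj (k2.trans (k1.trans h1).symm)) h12a.symm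
  · exact absurd (hinj (k3.trans (k2.trans h2).symm)) h23a.symm
  · exact ⟨k1, k2, k3⟩
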